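/- arXiv:1906.02153 — 3 statements merged into one kernel-verified Lean document; each statement's English description precedes it below -/
import Mathlib

section
/- Let S ⊂ ℝ² be a bounded measurable set with finite perimeter, let η be a unit vector, let l > 0, and let W(t) = √2 cos t. Then |∫_S W²(x·η / l) dx − |S|| ≤ C·H¹(∂S)·l for a universal constant C, under the assumption that the symmetric difference of S and any translate S + tη has measure at most H¹(∂S)·|t|. -/
open MeasureTheory

/-- for bounded measurable S ⊂ ℝ² of finite perimeter, a unit vector η and l > 0,
assuming |S △ (S + tη)| ≤ H¹(∂S)·t for all t > 0, one has
|∫_S W²(x·η/l) dx − |S|| ≤ C·H¹(∂S)·l with a universal constant C, where W(t) = √2 cos t. -/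
theorem stmt3 :
    ∃ C : ℝ, 0 < C ∧
      ∀ (S : Set (EuclideanSpace ℝ (Fin 2))) (η : EuclideanSpace ℝ (Fin 2)) (l : ℝ),
        MeasurableSet S → Bornology.IsBounded S → ‖η‖ = 1 → 0 < l →
        μH[1] (frontier S) ≠ ⊤ →
        (∀ t : ℝ, 0 < t →
            volume (symmDiff S ((fun x => x + t • η) '' S))
              ≤ μH[1] (frontier S) * ENNReal.ofReal t) →
        |(∫ x in S, (Real.sqrt 2 * Real.cos ((inner ℝ x η : ℝ) / l)) ^ 2)
            - (volume S).toReal|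
          ≤ C * (μH[1] (frontier S)).toReal * l := by
  refine ⟨Real.pi, Real.pi_pos, ?_⟩
  intro S η l hS hSb hη hl hH htrans
  set P : ℝ := (μH[1] (frontier S)).toReal with hPdef
  have hPnn : 0 ≤ P := ENNReal.toReal_nonneg
  have hlne : l ≠ 0 := ne_of_gt hl
  set t : ℝ := Real.pi * l / 2 with htdef
  have ht : 0 < t := by positivity
  set v : EuclideanSpace ℝ (Fin 2) := t • η with hvdef
  set f : EuclideanSpace ℝ (Fin 2) → ℝ :=
    fun x => Real.cos (2 * (inner ℝ x η : ℝ) / l) with hfdef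
  have hfc : Continuous f :=
    Real.continuous_cos.comp
      (((continuous_const.mul (continuous_id.inner continuous_const))).div_const l)
  have hfbd : ∀ x, ‖f x‖ ≤ 1 := fun x => by
    simpa [hfdef] using Real.abs_cos_le_one (2 * (inner ℝ x η : ℝ) / l)
  -- translation map
  set T : EuclideanSpace ℝ (Fin 2) → EuclideanSpace ℝ (Fin 2) := fun x => x + v with hTdef
  have hTmp : MeasurePreserving T volume volume := measurePreserving_add_right volume v
  have hTemb : MeasurableEmbedding T := (MeasurableEquiv.addRight v).measurableEmbedding
  set S' : Set (EuclideanSpace ℝ (Fin 2)) := T '' S with hS'def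
  have hS' : MeasurableSet S' := hTemb.measurableSet_image.2 hS
  have hvolS : volume S < ⊤ := hSb.measure_lt_top
  have hvolS' : volume S' = volume S := by
    have := hTemb.map_apply volume S'
    rw [hTmp.map_eq] at this
    rw [this, Set.preimage_image_eq S hTemb.injective]
  -- key antiperiodicity: f (T x) = - f x
  have hkey : ∀ x, f (T x) = - f x := by
    intro x
    have hvη : (inner ℝ v η : ℝ) = t := by
      rw [hvdef, real_inner_smul_left, real_inner_self_eq_norm_sq, hη]; ring
    have h1 : (inner ℝ (T x) η : ℝ) = (inner ℝ x η : ℝ) + t := by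
      rw [hTdef]; simp only [inner_add_left, hvη]
    have h2 : 2 * ((inner ℝ x η : ℝ) + t) / l = 2 * (inner ℝ x η : ℝ) / l + Real.pi := by
      rw [htdef]; field_simp
    simp only [hfdef, h1, h2]
    simp [Real.cos_add]
  -- integrability
  have hintf : IntegrableOn f S volume :=
    Measure.integrableOn_of_bounded hvolS.ne hfc.aestronglyMeasurable
      (Filter.Eventually.of_forall fun x => hfbd x)
  have hintf' : IntegrableOn f S' volume :=
    Measure.integrableOn_of_bounded (by rw [hvolS']; exact hvolS.ne)
      hfc.aestronglyMeasurable (Filter.Eventually.of_forall fun x => hfbd x)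
  -- rewrite the integrand
  have hre : (∫ x in S, (Real.sqrt 2 * Real.cos ((inner ℝ x η : ℝ) / l)) ^ 2)
      = (volume S).toReal + ∫ x in S, f x := by
    have heq : ∀ x : EuclideanSpace ℝ (Fin 2),
        (Real.sqrt 2 * Real.cos ((inner ℝ x η : ℝ) / l)) ^ 2 = 1 + f x := by
      intro x
      have h2 : Real.sqrt 2 ^ 2 = 2 := Real.sq_sqrt (by norm_num)
      have hc := Real.cos_sq ((inner ℝ x η : ℝ) / l)
      have harg : 2 * ((inner ℝ x η : ℝ) / l) = 2 * (inner ℝ x η : ℝ) / l := by ring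
      rw [mul_pow, h2, hc, harg]
      simp [hfdef]; ring
    rw [show (∫ x in S, (Real.sqrt 2 * Real.cos ((inner ℝ x η : ℝ) / l)) ^ 2)
        = ∫ x in S, (1 + f x) from integral_congr_ae (Filter.Eventually.of_forall
          fun x => heq x)]
    rw [integral_add (integrableOn_const (C := (1:ℝ)) hvolS.ne) hintf]
    simp [Measure.real]
  -- the translated integral
  have htrans_int : ∫ x in S', f x = - ∫ x in S, f x := by
    rw [hS'def, hTmp.setIntegral_image_emb hTemb f S]
    simp only [hkey]
    exact integral_neg f
  -- splitting
  have hsplit1 : (∫ x in S ∩ S', f x) + (∫ x in S \ S', f x) = ∫ x in S, f x :=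
    integral_inter_add_diff hS' hintf
  have hsplit2 : (∫ x in S' ∩ S, f x) + (∫ x in S' \ S, f x) = ∫ x in S', f x :=
    integral_inter_add_diff hS hintf'
  have hdiffeq : (2 : ℝ) * ∫ x in S, f x
      = (∫ x in S \ S', f x) - (∫ x in S' \ S, f x) := by
    have hcomm : S ∩ S' = S' ∩ S := Set.inter_comm _ _
    have : (∫ x in S, f x) - (∫ x in S', f x)
        = (∫ x in S \ S', f x) - (∫ x in S' \ S, f x) := by
      rw [← hsplit1, ← hsplit2, hcomm]; ring
    rw [htrans_int] at this; linarith [this]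
  -- measure bounds
  have hμd1 : volume (S \ S') < ⊤ := lt_of_le_of_lt (measure_mono Set.diff_subset) hvolS
  have hμd2 : volume (S' \ S) < ⊤ := by
    refine lt_of_le_of_lt (measure_mono Set.diff_subset) ?_
    rw [hvolS']; exact hvolS
  have hb1 : ‖∫ x in S \ S', f x‖ ≤ 1 * (volume (S \ S')).toReal :=
    norm_setIntegral_le_of_norm_le_const hμd1 (fun x _ => hfbd x)
  have hb2 : ‖∫ x in S' \ S, f x‖ ≤ 1 * (volume (S' \ S)).toReal :=
    norm_setIntegral_le_of_norm_le_const hμd2 (fun x _ => hfbd x)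
  -- symmetric difference bound
  have hsd' : volume (symmDiff S S') ≤ μH[1] (frontier S) * ENNReal.ofReal t := htrans t ht
  have hsdsplit : volume (symmDiff S S') = volume (S \ S') + volume (S' \ S) := by
    rw [Set.symmDiff_def]
    exact measure_union (disjoint_sdiff_sdiff) (hS'.diff hS)
  have hRHSne : μH[1] (frontier S) * ENNReal.ofReal t ≠ ⊤ :=
    ENNReal.mul_ne_top hH ENNReal.ofReal_ne_top
  have hsum_real : (volume (S \ S')).toReal + (volume (S' \ S)).toReal ≤ P * t := by
    have h1 : (volume (symmDiff S S')).toReal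
        ≤ (μH[1] (frontier S) * ENNReal.ofReal t).toReal :=
      ENNReal.toReal_mono hRHSne hsd'
    have h2 : (μH[1] (frontier S) * ENNReal.ofReal t).toReal = P * t := by
      rw [ENNReal.toReal_mul, ENNReal.toReal_ofReal ht.le]
    have h3 : (volume (symmDiff S S')).toReal
        = (volume (S \ S')).toReal + (volume (S' \ S)).toReal := by
      rw [hsdsplit, ENNReal.toReal_add hμd1.ne hμd2.ne]
    linarith [h1, h2 ▸ h1, h3 ▸ h1]
  -- conclude
  have hmain : |∫ x in S, f x| ≤ P * t / 2 := by
    have : |(2 : ℝ) * ∫ x in S, f x| ≤ P * t := by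
      rw [hdiffeq]
      calc |(∫ x in S \ S', f x) - (∫ x in S' \ S, f x)|
          ≤ |∫ x in S \ S', f x| + |∫ x in S' \ S, f x| := abs_sub _ _
        _ ≤ (volume (S \ S')).toReal + (volume (S' \ S)).toReal := by
            have := hb1; have := hb2
            simp only [Real.norm_eq_abs, one_mul] at *
            linarith
        _ ≤ P * t := hsum_real
    rw [abs_mul] at this
    simp only [abs_two] at this
    linarith [this]
  rw [hre]
  have hfinal : |(volume S).toReal + (∫ x in S, f x) - (volume S).toReal|
      = |∫ x in S, f x| := by ring_nf
  rw [hfinal]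
  have : P * t / 2 = Real.pi * P * l / 4 := by rw [htdef]; ring
  rw [this] at hmain
  nlinarith [Real.pi_pos, mul_nonneg hPnn hl.le, hmain]
end

section
/- Let E = {(x₁,x₂) : x₁²/a² + x₂²/b² < 1} with 0 < b < a. The function φ₊(x) = (1/2)(b² + (1 − b²/a²)x₁²) on E, extended by (1/2)|x|² outside E, is convex on ℝ², and any convex function φ on ℝ² equal to (1/2)|x|² on ℝ² \ E satisfies φ ≤ φ₊ on E. -/
open Classical

/-- The open ellipse with semi-axes a, b. -/
def Eell (a b : ℝ) : Set (ℝ × ℝ) := {p | p.1 ^ 2 / a ^ 2 + p.2 ^ 2 / b ^ 2 < 1}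

/-- The candidate largest convex extension φ₊ for the ellipse. -/
noncomputable def phiPlusEll (a b : ℝ) : ℝ × ℝ → ℝ := fun p =>
  if p ∈ Eell a b then (1 / 2) * (b ^ 2 + (1 - b ^ 2 / a ^ 2) * p.1 ^ 2)
  else (1 / 2) * (p.1 ^ 2 + p.2 ^ 2)

lemma quad1_convex : ConvexOn ℝ Set.univ (fun p : ℝ × ℝ => (1 / 2) * (p.1 ^ 2 + p.2 ^ 2)) := by
  refine ⟨convex_univ, ?_⟩
  rintro ⟨x1, x2⟩ - ⟨y1, y2⟩ - s t hs ht hst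
  simp only [Prod.smul_mk, Prod.mk_add_mk, smul_eq_mul]
  have ht' : t = 1 - s := by linarith
  subst ht'
  nlinarith [mul_nonneg (mul_nonneg hs ht) (sq_nonneg (x1 - y1)),
    mul_nonneg (mul_nonneg hs ht) (sq_nonneg (x2 - y2))]

lemma quad2_convex (a b : ℝ) (hb : 0 < b) (hba : b < a) :
    ConvexOn ℝ Set.univ (fun p : ℝ × ℝ => (1 / 2) * (b ^ 2 + (1 - b ^ 2 / a ^ 2) * p.1 ^ 2)) := by
  have ha : (0:ℝ) < a := hb.trans hba
  have hc : (0:ℝ) ≤ 1 - b ^ 2 / a ^ 2 := by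
    rw [sub_nonneg, div_le_one (by positivity)]
    nlinarith
  set u : ℝ := 1 - b ^ 2 / a ^ 2 with hu
  refine ⟨convex_univ, ?_⟩
  rintro ⟨x1, x2⟩ - ⟨y1, y2⟩ - s t hs ht hst
  simp only [Prod.smul_mk, Prod.mk_add_mk, smul_eq_mul]
  have ht' : t = 1 - s := by linarith
  subst ht'
  have key : s * (1 / 2 * (b ^ 2 + u * x1 ^ 2)) + (1 - s) * (1 / 2 * (b ^ 2 + u * y1 ^ 2))
      - 1 / 2 * (b ^ 2 + u * (s * x1 + (1 - s) * y1) ^ 2)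
      = (1 / 2) * u * (s * (1 - s)) * (x1 - y1) ^ 2 := by ring
  nlinarith [mul_nonneg (mul_nonneg (mul_nonneg (by norm_num : (0:ℝ) ≤ 1/2) hc)
    (mul_nonneg hs ht)) (sq_nonneg (x1 - y1)), key]

lemma phiPlus_eq_max (a b : ℝ) (hb : 0 < b) (hba : b < a) :
    phiPlusEll a b = (fun p : ℝ × ℝ => (1 / 2) * (p.1 ^ 2 + p.2 ^ 2)) ⊔
      (fun p : ℝ × ℝ => (1 / 2) * (b ^ 2 + (1 - b ^ 2 / a ^ 2) * p.1 ^ 2)) := by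
  have ha : (0:ℝ) < a := hb.trans hba
  have ha2 : (a:ℝ) ^ 2 ≠ 0 := by positivity
  funext p
  simp only [Pi.sup_apply, phiPlusEll]
  have ediff : (1 / 2) * (b ^ 2 + (1 - b ^ 2 / a ^ 2) * p.1 ^ 2) - (1 / 2) * (p.1 ^ 2 + p.2 ^ 2)
      = (a ^ 2 * b ^ 2 - p.1 ^ 2 * b ^ 2 - a ^ 2 * p.2 ^ 2) / (2 * a ^ 2) := by
    field_simp
    ring
  by_cases h : p ∈ Eell a b
  · rw [if_pos h]
    have h' : p.1 ^ 2 / a ^ 2 + p.2 ^ 2 / b ^ 2 < 1 := h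
    have h'' : p.1 ^ 2 * b ^ 2 + a ^ 2 * p.2 ^ 2 < a ^ 2 * b ^ 2 := by
      rw [div_add_div _ _ (by positivity) (by positivity), div_lt_one (by positivity)] at h'
      nlinarith
    rw [max_eq_right]
    rw [← sub_nonneg, ediff]
    apply div_nonneg _ (by positivity)
    nlinarith
  · rw [if_neg h]
    have h' : 1 ≤ p.1 ^ 2 / a ^ 2 + p.2 ^ 2 / b ^ 2 := not_lt.mp h
    have h'' : a ^ 2 * b ^ 2 ≤ p.1 ^ 2 * b ^ 2 + a ^ 2 * p.2 ^ 2 := by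
      rw [div_add_div _ _ (by positivity) (by positivity), le_div_iff₀ (by positivity)] at h'
      nlinarith
    rw [max_eq_left]
    rw [← sub_nonneg, show (1 / 2) * (p.1 ^ 2 + p.2 ^ 2) - (1 / 2) * (b ^ 2 + (1 - b ^ 2 / a ^ 2) * p.1 ^ 2)
      = (p.1 ^ 2 * b ^ 2 + a ^ 2 * p.2 ^ 2 - a ^ 2 * b ^ 2) / (2 * a ^ 2) by field_simp; ring]
    apply div_nonneg _ (by positivity)
    linarith

/-- φ₊ is convex on ℝ², and every convex φ equal to (1/2)|x|² off the ellipse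
satisfies φ ≤ φ₊ on the ellipse. -/
theorem stmt8 (a b : ℝ) (hb : 0 < b) (hba : b < a) :
    ConvexOn ℝ Set.univ (phiPlusEll a b) ∧
    ∀ φ : ℝ × ℝ → ℝ, ConvexOn ℝ Set.univ φ →
      (∀ p ∉ Eell a b, φ p = (1 / 2) * (p.1 ^ 2 + p.2 ^ 2)) →
      ∀ p ∈ Eell a b, φ p ≤ phiPlusEll a b p := by
  have ha : (0:ℝ) < a := hb.trans hba
  constructor
  · rw [phiPlus_eq_max a b hb hba]
    exact (quad1_convex).sup (quad2_convex a b hb hba)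
  · intro φ hφ hout p hp
    have hp' : p.1 ^ 2 / a ^ 2 + p.2 ^ 2 / b ^ 2 < 1 := hp
    have hrem : (0:ℝ) < 1 - p.1 ^ 2 / a ^ 2 := by
      have : (0:ℝ) ≤ p.2 ^ 2 / b ^ 2 := by positivity
      linarith
    set t : ℝ := b * Real.sqrt (1 - p.1 ^ 2 / a ^ 2) with ht
    have htpos : 0 < t := by positivity
    have ht2 : t ^ 2 = b ^ 2 * (1 - p.1 ^ 2 / a ^ 2) := by
      rw [ht, mul_pow, Real.sq_sqrt hrem.le]
    have hp2t : p.2 ^ 2 < t ^ 2 := by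
      rw [ht2]
      have h2 : p.2 ^ 2 / b ^ 2 < 1 - p.1 ^ 2 / a ^ 2 := by linarith
      rw [div_lt_iff₀ (by positivity : (0:ℝ) < b ^ 2)] at h2
      linarith [h2]
    have habs : |p.2| < t := by
      nlinarith [sq_abs p.2, abs_nonneg p.2]
    have hlt : -t < p.2 ∧ p.2 < t := abs_lt.mp habs
    -- boundary points
    have hbound : ∀ s : ℝ, s ^ 2 = t ^ 2 → (p.1, s) ∉ Eell a b := by
      intro s hs hmem
      have hmem' : p.1 ^ 2 / a ^ 2 + s ^ 2 / b ^ 2 < 1 := hmem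
      have : s ^ 2 / b ^ 2 = 1 - p.1 ^ 2 / a ^ 2 := by
        rw [hs, ht2]
        field_simp
      rw [this] at hmem'
      linarith
    have hx : (p.1, t) ∉ Eell a b := hbound t rfl
    have hy : (p.1, -t) ∉ Eell a b := hbound (-t) (by ring)
    have hφx : φ (p.1, t) = (1/2) * (p.1 ^ 2 + t ^ 2) := by
      simpa using hout _ hx
    have hφy : φ (p.1, -t) = (1/2) * (p.1 ^ 2 + t ^ 2) := by
      have := hout _ hy
      simpa using this
    set lam : ℝ := (p.2 + t) / (2 * t) with hlam
    set mu : ℝ := (t - p.2) / (2 * t) with hmu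
    have hlam0 : 0 ≤ lam := by
      apply div_nonneg _ (by positivity)
      linarith [hlt.1]
    have hmu0 : 0 ≤ mu := by
      apply div_nonneg _ (by positivity)
      linarith [hlt.2]
    have hsum : lam + mu = 1 := by
      rw [hlam, hmu, ← add_div, show p.2 + t + (t - p.2) = 2 * t by ring]
      exact div_self (by positivity)
    have htne : t ≠ 0 := ne_of_gt htpos
    have hcomb : lam • ((p.1, t) : ℝ × ℝ) + mu • ((p.1, -t) : ℝ × ℝ) = p := by
      apply Prod.ext
      · simp only [Prod.smul_mk, Prod.mk_add_mk, smul_eq_mul]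
        rw [← add_mul, hsum, one_mul]
      · simp only [Prod.smul_mk, Prod.mk_add_mk, smul_eq_mul]
        rw [hlam, hmu]
        field_simp
        ring
    have key := hφ.2 (Set.mem_univ ((p.1, t) : ℝ × ℝ)) (Set.mem_univ ((p.1, -t) : ℝ × ℝ))
      hlam0 hmu0 hsum
    rw [hcomb, hφx, hφy] at key
    have hle : φ p ≤ (1/2) * (p.1 ^ 2 + t ^ 2) := by
      calc φ p ≤ lam * ((1/2) * (p.1 ^ 2 + t ^ 2)) + mu * ((1/2) * (p.1 ^ 2 + t ^ 2)) := key
        _ = (lam + mu) * ((1/2) * (p.1 ^ 2 + t ^ 2)) := by ring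
        _ = (1/2) * (p.1 ^ 2 + t ^ 2) := by rw [hsum, one_mul]
    have hval : phiPlusEll a b p = (1/2) * (p.1 ^ 2 + t ^ 2) := by
      rw [phiPlusEll]
      simp only [if_pos hp]
      rw [ht2]
      field_simp
      ring
    rw [hval]
    exact hle
end

section
/- Let Ω ⊂ ℝ² be open and bounded, and let φ₊(x) = sup{φ(x) : φ convex on ℝ², φ = (1/2)|·|² on ℝ² \ Ω}. Then for x ∈ Ω, φ₊(x) equals the infimum of Σᵢ θᵢ (1/2)|yᵢ|² over all representations x = Σᵢ θᵢ yᵢ as a convex combination of at most three points yᵢ ∈ ℝ² \ Ω. -/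
open Finset

noncomputable section Stmt10Aux

abbrev EE := EuclideanSpace ℝ (Fin 2)

def ff (y : EE) : ℝ := (1 / 2) * ‖y‖ ^ 2

lemma ff_convex : ConvexOn ℝ Set.univ ff := by
  refine ⟨convex_univ, ?_⟩
  intro x _ y _ a b ha hb hab
  simp only [smul_eq_mul, ff]
  have expand : ‖a • x + b • y‖ ^ 2
      = a^2 * ‖x‖^2 + 2*(a*b*(inner ℝ x y : ℝ)) + b^2 * ‖y‖^2 := by
    rw [norm_add_sq_real, norm_smul, norm_smul, real_inner_smul_left, real_inner_smul_right]
    rw [Real.norm_eq_abs, Real.norm_eq_abs, abs_of_nonneg ha, abs_of_nonneg hb]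
    ring
  have key : (inner ℝ x y : ℝ) ≤ (‖x‖^2 + ‖y‖^2)/2 := by
    nlinarith [real_inner_le_norm x y, sq_nonneg (‖x‖ - ‖y‖)]
  nlinarith [mul_nonneg (mul_nonneg ha hb)
    (by linarith [key] : (0:ℝ) ≤ ‖x‖^2 + ‖y‖^2 - 2*(inner ℝ x y : ℝ)), expand]

def comboMap {m : ℕ} (y : Fin m → EE) : (Fin m → ℝ) →ₗ[ℝ] EE × ℝ where
  toFun c := (∑ i, c i • y i, ∑ i, c i)
  map_add' c d := by
    simp [Prod.ext_iff, add_smul, Finset.sum_add_distrib]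
  map_smul' r c := by
    simp [Prod.ext_iff, smul_smul, Finset.mul_sum, Finset.smul_sum]

lemma exists_dependence {n : ℕ} (hn : 3 ≤ n) (y : Fin (n+1) → EE) :
    ∃ c : Fin (n+1) → ℝ, c ≠ 0 ∧ (∑ i, c i • y i) = 0 ∧ (∑ i, c i) = 0 ∧
      (∑ i, c i * ff (y i)) ≤ 0 := by
  have hnotinj : ¬ Function.Injective (comboMap y) := by
    intro hinj
    have h1 := LinearMap.finrank_le_finrank_of_injective hinj
    have h2 : Module.finrank ℝ (Fin (n+1) → ℝ) = n + 1 := Module.finrank_fin_fun ℝ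
    have h3 : Module.finrank ℝ (EE × ℝ) = 3 := by
      rw [Module.finrank_prod, finrank_euclideanSpace_fin, Module.finrank_self]
    omega
  rw [← LinearMap.ker_eq_bot] at hnotinj
  obtain ⟨c, hcmem, hc0⟩ := Submodule.exists_mem_ne_zero_of_ne_bot hnotinj
  have hker : (∑ i, c i • y i) = 0 ∧ (∑ i, c i) = 0 := by
    have h := Prod.ext_iff.mp (LinearMap.mem_ker.mp hcmem)
    exact ⟨h.1, h.2⟩
  rcases le_or_gt (∑ i, c i * ff (y i)) 0 with h | h
  · exact ⟨c, hc0, hker.1, hker.2, h⟩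
  · refine ⟨-c, neg_ne_zero.mpr hc0, ?_, ?_, ?_⟩
    · simp only [Pi.neg_apply, neg_smul, Finset.sum_neg_distrib]
      rw [hker.1, neg_zero]
    · simp only [Pi.neg_apply, Finset.sum_neg_distrib]
      rw [hker.2, neg_zero]
    · simp only [Pi.neg_apply, neg_mul, Finset.sum_neg_distrib]
      linarith

lemma reduce_step {n : ℕ} (hn : 3 ≤ n) {z : EE} (y : Fin (n+1) → EE) (θ : Fin (n+1) → ℝ)
    (h0 : ∀ i, 0 ≤ θ i) (h1 : ∑ i, θ i = 1) (hz : ∑ i, θ i • y i = z) :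
    ∃ (y' : Fin n → EE) (θ' : Fin n → ℝ), (∀ i, ∃ j, y' i = y j) ∧ (∀ i, 0 ≤ θ' i) ∧
      ∑ i, θ' i = 1 ∧ ∑ i, θ' i • y' i = z ∧
      ∑ i, θ' i * ff (y' i) ≤ ∑ i, θ i * ff (y i) := by
  obtain ⟨c, hc0, hcy, hcs, hcf⟩ := exists_dependence hn y
  have hneg : ∃ i, c i < 0 := by
    by_contra h
    push_neg at h
    apply hc0
    funext i
    have hnn : ∀ j ∈ Finset.univ, (0:ℝ) ≤ c j := fun j _ => h j
    have := (Finset.sum_eq_zero_iff_of_nonneg hnn).mp hcs i (Finset.mem_univ i)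
    simpa using this
  set s : Finset (Fin (n+1)) := Finset.univ.filter (fun i => c i < 0) with hs
  have hsne : s.Nonempty := by
    obtain ⟨i, hi⟩ := hneg
    exact ⟨i, by simp [hs, hi]⟩
  obtain ⟨j, hjs, hjmin⟩ := Finset.exists_min_image s (fun i => θ i / (-c i)) hsne
  have hcj : c j < 0 := by simpa [hs] using hjs
  set τ : ℝ := θ j / (-c j) with hτ
  have hτ0 : 0 ≤ τ := div_nonneg (h0 j) (by linarith)
  set θ₁ : Fin (n+1) → ℝ := fun i => θ i + τ * c i with hθ₁
  have hθ₁0 : ∀ i, 0 ≤ θ₁ i := by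
    intro i
    rcases lt_or_ge (c i) 0 with hci | hci
    · have his : i ∈ s := by simp [hs, hci]
      have hle := hjmin i his
      have hmm : τ * (-c i) ≤ (θ i / (-c i)) * (-c i) :=
        mul_le_mul_of_nonneg_right hle (by linarith)
      rw [div_mul_cancel₀ _ (by linarith : -c i ≠ 0)] at hmm
      simp only [hθ₁]
      nlinarith
    · exact add_nonneg (h0 i) (mul_nonneg hτ0 hci)
  have hθ₁j : θ₁ j = 0 := by
    have hcj' : c j ≠ 0 := ne_of_lt hcj
    show θ j + θ j / -c j * c j = 0
    rw [div_neg, neg_mul, div_mul_cancel₀ _ hcj']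
    ring
  have hθ₁s : ∑ i, θ₁ i = 1 := by
    simp only [hθ₁, Finset.sum_add_distrib, ← Finset.mul_sum, hcs, h1, mul_zero, add_zero]
  have hθ₁z : ∑ i, θ₁ i • y i = z := by
    simp only [hθ₁, add_smul, Finset.sum_add_distrib, mul_smul, ← Finset.smul_sum, hcy, hz,
      smul_zero, add_zero]
  have hθ₁f : ∑ i, θ₁ i * ff (y i) ≤ ∑ i, θ i * ff (y i) := by
    simp only [hθ₁, add_mul, Finset.sum_add_distrib, mul_assoc, ← Finset.mul_sum]
    nlinarith [mul_nonpos_of_nonneg_of_nonpos hτ0 hcf]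
  refine ⟨y ∘ j.succAbove, θ₁ ∘ j.succAbove, fun i => ⟨j.succAbove i, rfl⟩, fun i => hθ₁0 _,
    ?_, ?_, ?_⟩
  · have := Fin.sum_univ_succAbove θ₁ j
    rw [hθ₁j, zero_add] at this
    simp only [Function.comp_apply]
    rw [← this]; exact hθ₁s
  · have := Fin.sum_univ_succAbove (fun i => θ₁ i • y i) j
    rw [hθ₁j, zero_smul, zero_add] at this
    simp only [Function.comp_apply]
    rw [← this]; exact hθ₁z
  · have := Fin.sum_univ_succAbove (fun i => θ₁ i * ff (y i)) j
    rw [hθ₁j, zero_mul, zero_add] at this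
    simp only [Function.comp_apply]
    rw [← this]; exact hθ₁f

lemma reduce_to_three (m : ℕ) {z : EE} (y : Fin (m+3) → EE) (θ : Fin (m+3) → ℝ)
    (h0 : ∀ i, 0 ≤ θ i) (h1 : ∑ i, θ i = 1) (hz : ∑ i, θ i • y i = z) :
    ∃ (y' : Fin 3 → EE) (θ' : Fin 3 → ℝ), (∀ i, ∃ j, y' i = y j) ∧ (∀ i, 0 ≤ θ' i) ∧
      ∑ i, θ' i = 1 ∧ ∑ i, θ' i • y' i = z ∧
      ∑ i, θ' i * ff (y' i) ≤ ∑ i, θ i * ff (y i) := by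
  induction m generalizing z with
  | zero => exact ⟨y, θ, fun i => ⟨i, rfl⟩, h0, h1, hz, le_refl _⟩
  | succ k ih =>
    obtain ⟨y₁, θ₁, hr, h0', h1', hz', hf'⟩ :=
      reduce_step (n := k+3) (by omega) y θ h0 h1 hz
    obtain ⟨y', θ', hr', h0'', h1'', hz'', hf''⟩ := ih y₁ θ₁ h0' h1' hz'
    refine ⟨y', θ', fun i => ?_, h0'', h1'', hz'', le_trans hf'' hf'⟩
    obtain ⟨j, hj⟩ := hr' i
    obtain ⟨j', hj'⟩ := hr j
    exact ⟨j', by rw [hj, hj']⟩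

def Tset (Ω : Set EE) (z : EE) : Set ℝ :=
  {v : ℝ | ∃ (y : Fin 3 → EE) (θ : Fin 3 → ℝ),
    (∀ i, y i ∉ Ω) ∧ (∀ i, 0 ≤ θ i) ∧ (∑ i, θ i) = 1 ∧ (∑ i, θ i • y i) = z ∧
    v = ∑ i, θ i * ((1 / 2) * ‖y i‖ ^ 2)}

lemma ff_le_of_mem {Ω : Set EE} {z : EE} {v : ℝ} (hv : v ∈ Tset Ω z) : ff z ≤ v := by
  obtain ⟨y, θ, _, h0, h1, hz, hveq⟩ := hv
  rw [hveq]
  calc ff z = ff (∑ i, θ i • y i) := by rw [hz]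
    _ ≤ ∑ i, θ i • ff (y i) :=
        ff_convex.map_sum_le (fun i _ => h0 i) h1 (fun i _ => Set.mem_univ _)
    _ = ∑ i, θ i * ((1/2)*‖y i‖^2) := by simp [ff, smul_eq_mul]

lemma Tset_bddBelow (Ω : Set EE) (z : EE) : BddBelow (Tset Ω z) :=
  ⟨ff z, fun _ hv => ff_le_of_mem hv⟩

lemma Tset_nonempty {Ω : Set EE} {R : ℝ} (hR : 0 ≤ R) (hΩR : ∀ w ∈ Ω, ‖w‖ ≤ R) (z : EE) :
    (Tset Ω z).Nonempty := by
  set e : EE := EuclideanSpace.single (0 : Fin 2) (1:ℝ) with he'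
  have he : ‖e‖ = 1 := by rw [he', EuclideanSpace.norm_single]; norm_num
  set cc : ℝ := ‖z‖ + R + 1 with hcc
  have key : ∀ t : ℝ, |t| = cc → z + t • e ∉ Ω := by
    intro t ht hmem
    have h1 : ‖z + t • e‖ ≤ R := hΩR _ hmem
    have h2 : ‖t • e‖ ≤ ‖z + t • e‖ + ‖z‖ := by
      have h3 := norm_sub_le (z + t • e) z
      simpa using h3
    rw [norm_smul, he, mul_one, Real.norm_eq_abs, ht] at h2
    have hz0 : 0 ≤ ‖z‖ := norm_nonneg z
    simp only [hcc] at h2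
    linarith
  have hccpos : 0 < cc := by positivity
  refine ⟨_, ![z + cc • e, z + (-cc) • e, z + cc • e], ![1/2, 1/2, 0], ?_, ?_, ?_, ?_, rfl⟩
  · intro i
    fin_cases i
    · exact key cc (abs_of_pos hccpos)
    · exact key (-cc) (by rw [abs_neg, abs_of_pos hccpos])
    · exact key cc (abs_of_pos hccpos)
  · intro i; fin_cases i <;> norm_num
  · simp [Fin.sum_univ_three]
    norm_num
  · simp only [Fin.sum_univ_three, Matrix.cons_val_zero, Matrix.cons_val_one, Matrix.head_cons,
      Matrix.cons_val_two, Matrix.tail_cons]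
    module

def psi (Ω : Set EE) (z : EE) : ℝ := sInf (Tset Ω z)

lemma ff_le_psi {Ω : Set EE} {R : ℝ} (hR : 0 ≤ R) (hΩR : ∀ w ∈ Ω, ‖w‖ ≤ R) (z : EE) :
    ff z ≤ psi Ω z :=
  le_csInf (Tset_nonempty hR hΩR z) (fun _ hv => ff_le_of_mem hv)

lemma psi_eq_of_not_mem {Ω : Set EE} {R : ℝ} (hR : 0 ≤ R) (hΩR : ∀ w ∈ Ω, ‖w‖ ≤ R)
    {z : EE} (hz : z ∉ Ω) : psi Ω z = ff z := by
  refine le_antisymm ?_ (ff_le_psi hR hΩR z)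
  apply csInf_le (Tset_bddBelow Ω z)
  refine ⟨![z, z, z], ![1, 0, 0], ?_, ?_, ?_, ?_, ?_⟩
  · intro i; fin_cases i <;> exact hz
  · intro i; fin_cases i <;> norm_num
  · simp [Fin.sum_univ_three]
  · simp [Fin.sum_univ_three]
  · simp [Fin.sum_univ_three, ff]

lemma psi_convex {Ω : Set EE} {R : ℝ} (hR : 0 ≤ R) (hΩR : ∀ w ∈ Ω, ‖w‖ ≤ R) :
    ConvexOn ℝ Set.univ (psi Ω) := by
  refine ⟨convex_univ, ?_⟩
  intro z₁ _ z₂ _ a b ha hb hab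
  rw [smul_eq_mul, smul_eq_mul]
  refine le_of_forall_sub_le fun ε hε => ?_
  rw [sub_le_iff_le_add]
  obtain ⟨v₁, hv₁T, hv₁⟩ := exists_lt_of_csInf_lt (Tset_nonempty hR hΩR z₁)
    (lt_add_of_pos_right (psi Ω z₁) hε)
  obtain ⟨v₂, hv₂T, hv₂⟩ := exists_lt_of_csInf_lt (Tset_nonempty hR hΩR z₂)
    (lt_add_of_pos_right (psi Ω z₂) hε)
  obtain ⟨y₁, θ₁, hy₁, h01, h11, hz1, hveq1⟩ := hv₁T
  obtain ⟨y₂, θ₂, hy₂, h02, h12, hz2, hveq2⟩ := hv₂T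
  set Y : Fin (3+3) → EE := Fin.append y₁ y₂ with hY
  set W : Fin (3+3) → ℝ := Fin.append (fun i => a * θ₁ i) (fun i => b * θ₂ i) with hW
  have hYΩ : ∀ i, Y i ∉ Ω := by
    intro i
    refine Fin.addCases (fun i => ?_) (fun i => ?_) i
    · rw [hY, Fin.append_left]; exact hy₁ i
    · rw [hY, Fin.append_right]; exact hy₂ i
  have hW0 : ∀ i, 0 ≤ W i := by
    intro i
    refine Fin.addCases (fun i => ?_) (fun i => ?_) i
    · rw [hW, Fin.append_left]; exact mul_nonneg ha (h01 i)
    · rw [hW, Fin.append_right]; exact mul_nonneg hb (h02 i)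
  have hWs : ∑ i, W i = 1 := by
    rw [Fin.sum_univ_add]
    simp only [hW, Fin.append_left, Fin.append_right, ← Finset.mul_sum, h11, h12,
      mul_one]
    exact hab
  have hWz : ∑ i, W i • Y i = a • z₁ + b • z₂ := by
    rw [Fin.sum_univ_add]
    simp only [hW, hY, Fin.append_left, Fin.append_right, mul_smul, ← Finset.smul_sum,
      hz1, hz2]
  have hWf : ∑ i, W i * ff (Y i) = a * v₁ + b * v₂ := by
    rw [Fin.sum_univ_add]
    simp only [hW, hY, Fin.append_left, Fin.append_right, mul_assoc, ← Finset.mul_sum]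
    rw [hveq1, hveq2]
    rfl
  obtain ⟨y', θ', hr, h0', h1', hz', hf'⟩ := reduce_to_three 3 Y W hW0 hWs hWz
  have hy'Ω : ∀ i, y' i ∉ Ω := by
    intro i
    obtain ⟨j, hj⟩ := hr i
    rw [hj]; exact hYΩ j
  have hmem : (∑ i, θ' i * ff (y' i)) ∈ Tset Ω (a • z₁ + b • z₂) :=
    ⟨y', θ', hy'Ω, h0', h1', hz', rfl⟩
  calc psi Ω (a • z₁ + b • z₂) ≤ ∑ i, θ' i * ff (y' i) :=
        csInf_le (Tset_bddBelow Ω _) hmem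
    _ ≤ ∑ i, W i * ff (Y i) := hf'
    _ = a * v₁ + b * v₂ := hWf
    _ ≤ a * (psi Ω z₁ + ε) + b * (psi Ω z₂ + ε) := by
        have g1 := mul_le_mul_of_nonneg_left (le_of_lt hv₁) ha
        have g2 := mul_le_mul_of_nonneg_left (le_of_lt hv₂) hb
        exact add_le_add g1 g2
    _ = a * psi Ω z₁ + b * psi Ω z₂ + ε := by
        have : a * ε + b * ε = ε := by rw [← add_mul, hab, one_mul]
        nlinarith [this]

end Stmt10Aux


/-- for x ∈ Ω, the pointwise supremum φ₊(x) over all convex functions agreeing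
with (1/2)|x|² off Ω equals the infimum of Σ θᵢ(1/2)|yᵢ|² over representations of x as a
convex combination of at most three points yᵢ ∉ Ω. -/
theorem stmt10 (Ω : Set (EuclideanSpace ℝ (Fin 2))) (hΩo : IsOpen Ω)
    (hΩb : Bornology.IsBounded Ω) :
    ∀ x ∈ Ω,
      sSup {v : ℝ | ∃ φ : EuclideanSpace ℝ (Fin 2) → ℝ, ConvexOn ℝ Set.univ φ ∧
          (∀ y ∉ Ω, φ y = (1 / 2) * ‖y‖ ^ 2) ∧ v = φ x}
        = sInf {v : ℝ | ∃ (y : Fin 3 → EuclideanSpace ℝ (Fin 2)) (θ : Fin 3 → ℝ),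
            (∀ i, y i ∉ Ω) ∧ (∀ i, 0 ≤ θ i) ∧ (∑ i, θ i) = 1 ∧ (∑ i, θ i • y i) = x ∧
            v = ∑ i, θ i * ((1 / 2) * ‖y i‖ ^ 2)} := by
  intro x hx
  obtain ⟨R₀, hR₀⟩ := hΩb.subset_closedBall 0
  set R : ℝ := max R₀ 0 with hRdef
  have hR : 0 ≤ R := le_max_right _ _
  have hΩR : ∀ w ∈ Ω, ‖w‖ ≤ R := by
    intro w hw
    have h := hR₀ hw
    rw [Metric.mem_closedBall, dist_zero_right] at h
    exact h.trans (le_max_left _ _)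
  set S : Set ℝ := {v : ℝ | ∃ φ : EuclideanSpace ℝ (Fin 2) → ℝ, ConvexOn ℝ Set.univ φ ∧
      (∀ y ∉ Ω, φ y = (1 / 2) * ‖y‖ ^ 2) ∧ v = φ x} with hSdef
  show sSup S = sInf (Tset Ω x)
  have hTne := Tset_nonempty hR hΩR x
  have hSmem : ff x ∈ S := ⟨ff, ff_convex, fun _ _ => rfl, rfl⟩
  have key : ∀ v ∈ S, ∀ t ∈ Tset Ω x, v ≤ t := by
    rintro v ⟨φ, hφc, hφΩ, rfl⟩ t ⟨y, θ, hy, h0, h1, hz, rfl⟩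
    calc φ x = φ (∑ i, θ i • y i) := by rw [hz]
      _ ≤ ∑ i, θ i • φ (y i) :=
          hφc.map_sum_le (fun i _ => h0 i) h1 (fun i _ => Set.mem_univ _)
      _ = ∑ i, θ i * ((1 / 2) * ‖y i‖ ^ 2) := by
          refine Finset.sum_congr rfl fun i _ => ?_
          rw [smul_eq_mul, hφΩ (y i) (hy i)]
  have hSbdd : BddAbove S := by
    obtain ⟨t₀, ht₀⟩ := hTne
    exact ⟨t₀, fun v hv => key v hv t₀ ht₀⟩
  have le₁ : sSup S ≤ sInf (Tset Ω x) :=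
    csSup_le ⟨ff x, hSmem⟩ fun v hv => le_csInf hTne fun t ht => key v hv t ht
  have hpsiS : psi Ω x ∈ S := by
    refine ⟨psi Ω, psi_convex hR hΩR, ?_, rfl⟩
    intro y hy
    rw [psi_eq_of_not_mem hR hΩR hy]
    rfl
  have le₂ : sInf (Tset Ω x) ≤ sSup S := le_csSup hSbdd hpsiS
  exact le_antisymm le₁ le₂
end
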